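/- (Optimism of the exploration-bonus cost.) Under the setting and hypotheses of the preceding bound — Θ̂ = [Â B̂], Θ* = [A* B*] ∈ ℝ^{n×(n+m)}, K ∈ ℝ^{m×n} with ‖K‖_F ≤ K̄, common stability constants C ≥ 1, ρ ∈ (0,1) with ‖(Â+B̂K)^k‖_F ≤ Cρ^k and ‖(A*+B*K)^k‖_F ≤ Cρ^k for all k ≥ 0, σ_w > 0, Σ_Θ := σ_w² ∑_{k=0}^∞ (A+BK)^k((A+BK)ᵀ)^k, Σ̃_Θ := [I;K] Σ_Θ [I;K]ᵀ, V symmetric positive definite, ‖(Θ̂−Θ*)V^{1/2}‖_F ≤ β, ‖Θ*‖_F ≤ D + 1/λ, and g := (C²(‖Q‖_F + K̄²‖R‖_F)/(1−ρ²))(2(D+1/λ)β‖V^{1/2}‖₂ + β²) — the bonus-modified cost is a lower bound on the true cost: tr((Q + Kᵀ R K) Σ_{Θ̂}) − g · tr(V^{-1} Σ̃_{Θ̂}) ≤ tr((Q + Kᵀ R K) Σ_{Θ*}). -/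

import Mathlib

open Matrix MeasureTheory ProbabilityTheory Filter

/-- Frobenius norm of a real matrix. -/
noncomputable def frob {α β : Type*} [Fintype α] [Fintype β] (A : Matrix α β ℝ) : ℝ :=
  Real.sqrt (∑ i, ∑ j, (A i j) ^ 2)

/-- Spectral norm (largest singular value) of a real matrix. -/
noncomputable def spec {α β : Type*} [Fintype α] [Fintype β] [DecidableEq β]
    (A : Matrix α β ℝ) : ℝ :=
  ‖LinearMap.toContinuousLinearMap (Matrix.toEuclideanLin A)‖

/-- The positive semidefinite square root of a positive semidefinite real matrix
(junk value `0` if the matrix is not positive semidefinite). -/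
noncomputable def msqrt {α : Type*} [Fintype α] [DecidableEq α]
    (M : Matrix α α ℝ) : Matrix α α ℝ :=
  open scoped Classical in
  if h : M.PosSemidef then
    h.1.eigenvectorUnitary.1 * diagonal ((↑) ∘ (√·) ∘ h.1.eigenvalues) *
      (star h.1.eigenvectorUnitary : Matrix α α ℝ) else 0

lemma msqrt_mul_self' {α : Type*} [Fintype α] [DecidableEq α] {M : Matrix α α ℝ}
    (h : M.PosSemidef) : msqrt M * msqrt M = M := by
  rw [msqrt, dif_pos h]
  have hU : (star h.1.eigenvectorUnitary : Matrix α α ℝ) * h.1.eigenvectorUnitary.1 = 1 :=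
    Matrix.UnitaryGroup.star_mul_self _
  simp only [Matrix.mul_assoc]
  rw [← Matrix.mul_assoc (star h.1.eigenvectorUnitary : Matrix α α ℝ), hU, Matrix.one_mul,
    ← Matrix.mul_assoc (diagonal _) (diagonal _), Matrix.diagonal_mul_diagonal]
  conv_rhs => rw [h.1.spectral_theorem]
  have hd : ∀ i, √(h.1.eigenvalues i) * √(h.1.eigenvalues i) = h.1.eigenvalues i :=
    fun i => Real.mul_self_sqrt (h.eigenvalues_nonneg i)
  simp [Function.comp_def, hd, Unitary.conjStarAlgAut_apply, Matrix.mul_assoc]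

lemma msqrt_transpose' {α : Type*} [Fintype α] [DecidableEq α] {M : Matrix α α ℝ}
    (h : M.PosSemidef) : (msqrt M)ᵀ = msqrt M := by
  rw [msqrt, dif_pos h, ← Matrix.conjTranspose_eq_transpose_of_trivial]
  simp only [Matrix.conjTranspose_mul, Matrix.diagonal_conjTranspose, Matrix.star_eq_conjTranspose,
    Matrix.conjTranspose_conjTranspose, star_trivial, Matrix.mul_assoc]

/-- Euclidean norm of a real vector. -/
noncomputable def vnorm {α : Type*} [Fintype α] (v : α → ℝ) : ℝ :=
  Real.sqrt (∑ i, (v i) ^ 2)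

/-- Closed-loop stationary state covariance
`Σ_Θ = σ_w² ∑_{k=0}^∞ (A+BK)^k ((A+BK)ᵀ)^k`. -/
noncomputable def clCov {n m : ℕ} (A : Matrix (Fin n) (Fin n) ℝ)
    (B : Matrix (Fin n) (Fin m) ℝ) (K : Matrix (Fin m) (Fin n) ℝ) (σw : ℝ) :
    Matrix (Fin n) (Fin n) ℝ :=
  σw ^ 2 • ∑' k : ℕ, (A + B * K) ^ k * ((A + B * K)ᵀ) ^ k

/-- The lifted covariance `Σ̃_Θ = [I; K] Σ_Θ [I; K]ᵀ`. -/
noncomputable def clCovTilde {n m : ℕ} (A : Matrix (Fin n) (Fin n) ℝ)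
    (B : Matrix (Fin n) (Fin m) ℝ) (K : Matrix (Fin m) (Fin n) ℝ) (σw : ℝ) :
    Matrix (Fin n ⊕ Fin m) (Fin n ⊕ Fin m) ℝ :=
  fromRows (1 : Matrix (Fin n) (Fin n) ℝ) K * clCov A B K σw *
    (fromRows (1 : Matrix (Fin n) (Fin n) ℝ) K)ᵀ

set_option maxHeartbeats 1000000
set_option linter.unusedSectionVars false
set_option linter.unusedVariables false

namespace MyOpt

variable {a b c d : Type*} [Fintype a] [Fintype b] [Fintype c] [Fintype d]

lemma frob_nonneg (A : Matrix a b ℝ) : 0 ≤ frob A := Real.sqrt_nonneg _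

lemma frob_sq (A : Matrix a b ℝ) : frob A ^ 2 = ∑ i, ∑ j, (A i j) ^ 2 :=
  Real.sq_sqrt (by positivity)

lemma frob_transpose (A : Matrix a b ℝ) : frob Aᵀ = frob A := by
  unfold frob
  rw [Finset.sum_comm]
  rfl

lemma abs_entry_le_frob (A : Matrix a b ℝ) (i : a) (j : b) : |A i j| ≤ frob A := by
  have h1 : (A i j) ^ 2 ≤ ∑ i, ∑ j, (A i j) ^ 2 := by
    calc (A i j)^2 ≤ ∑ j', (A i j')^2 :=
          Finset.single_le_sum (f := fun j' => (A i j')^2) (fun _ _ => sq_nonneg _)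
            (Finset.mem_univ j)
      _ ≤ ∑ i, ∑ j, (A i j)^2 :=
          Finset.single_le_sum (f := fun i => ∑ j, (A i j)^2)
            (fun _ _ => Finset.sum_nonneg fun _ _ => sq_nonneg _) (Finset.mem_univ i)
  calc |A i j| = Real.sqrt ((A i j)^2) := (Real.sqrt_sq_eq_abs _).symm
    _ ≤ frob A := Real.sqrt_le_sqrt h1

/-- Cauchy-Schwarz for entrywise products. -/
lemma sum_entry_mul_le (A B : Matrix a b ℝ) :
    ∑ i, ∑ j, A i j * B i j ≤ frob A * frob B := by
  have := Real.sum_mul_le_sqrt_mul_sqrt (Finset.univ : Finset (a × b))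
    (fun p => A p.1 p.2) (fun p => B p.1 p.2)
  simpa [frob, Fintype.sum_prod_type] using this

lemma trace_mul_le (A : Matrix a b ℝ) (B : Matrix b a ℝ) :
    (A * B).trace ≤ frob A * frob B := by
  have h : (A * B).trace = ∑ i, ∑ j, A i j * Bᵀ i j := by
    simp [Matrix.trace, Matrix.diag, Matrix.mul_apply, Matrix.transpose_apply]
  rw [h, ← frob_transpose B]
  exact sum_entry_mul_le A Bᵀ

lemma frob_mul_le (A : Matrix a b ℝ) (B : Matrix b c ℝ) :
    frob (A * B) ≤ frob A * frob B := by
  have hsq : ∑ i, ∑ j, ((A * B) i j)^2 ≤ (frob A * frob B)^2 := by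
    have h1 : ∀ (i : a) (j : c), ((A * B) i j)^2 ≤ (∑ k, A i k ^2) * (∑ k, B k j ^2) := by
      intro i j
      simpa [Matrix.mul_apply] using
        Finset.sum_mul_sq_le_sq_mul_sq Finset.univ (fun k => A i k) (fun k => B k j)
    calc ∑ i, ∑ j, ((A * B) i j)^2
        ≤ ∑ i, ∑ j, (∑ k, A i k ^2) * (∑ k, B k j ^2) := by
          exact Finset.sum_le_sum fun i _ => Finset.sum_le_sum fun j _ => h1 i j
      _ = (∑ i, ∑ k, A i k ^2) * (∑ j, ∑ k, B k j ^2) :=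
          (Finset.sum_mul_sum _ _ _ _).symm
      _ = (frob A)^2 * (frob B)^2 := by
          rw [frob_sq]
          congr 1
          rw [frob_sq, Finset.sum_comm]
      _ = (frob A * frob B)^2 := by ring
  calc frob (A * B) = Real.sqrt (∑ i, ∑ j, ((A * B) i j)^2) := rfl
    _ ≤ Real.sqrt ((frob A * frob B)^2) := Real.sqrt_le_sqrt hsq
    _ = frob A * frob B := Real.sqrt_sq (mul_nonneg (frob_nonneg _) (frob_nonneg _))

lemma frob_add_le (A B : Matrix a b ℝ) : frob (A + B) ≤ frob A + frob B := by
  have hsq : ∑ i, ∑ j, ((A + B) i j)^2 ≤ (frob A + frob B)^2 := by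
    have hab := sum_entry_mul_le A B
    have hA := frob_sq A
    have hB := frob_sq B
    have key : ∑ i, ∑ j, ((A + B) i j)^2
        = (∑ i, ∑ j, (A i j)^2) + (∑ i, ∑ j, 2 * (A i j * B i j)) + (∑ i, ∑ j, (B i j)^2) := by
      simp only [Matrix.add_apply]
      rw [← Finset.sum_add_distrib, ← Finset.sum_add_distrib]
      refine Finset.sum_congr rfl fun i _ => ?_
      rw [← Finset.sum_add_distrib, ← Finset.sum_add_distrib]
      refine Finset.sum_congr rfl fun j _ => ?_
      ring
    have key2 : (∑ i : a, ∑ j : b, 2 * (A i j * B i j)) = 2 * ∑ i, ∑ j, A i j * B i j := by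
      rw [Finset.mul_sum]
      exact Finset.sum_congr rfl fun i _ => (Finset.mul_sum _ _ _).symm
    rw [key, key2, ← hA, ← hB]
    nlinarith [hab]
  calc frob (A + B) = Real.sqrt (∑ i, ∑ j, ((A + B) i j)^2) := rfl
    _ ≤ Real.sqrt ((frob A + frob B)^2) := Real.sqrt_le_sqrt hsq
    _ = frob A + frob B := Real.sqrt_sq (add_nonneg (frob_nonneg _) (frob_nonneg _))

lemma frob_sq_eq_trace (A : Matrix a b ℝ) : frob A ^ 2 = (Aᵀ * A).trace := by
  rw [frob_sq]
  simp [Matrix.trace, Matrix.diag, Matrix.mul_apply, Matrix.transpose_apply, sq]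
  rw [Finset.sum_comm]

lemma spec_nonneg [DecidableEq b] (A : Matrix a b ℝ) : 0 ≤ spec A := norm_nonneg _

lemma frob_spec_mul [DecidableEq b] (X : Matrix a b ℝ) (Y : Matrix b c ℝ) :
    frob (X * Y) ≤ spec X * frob Y := by
  have key : ∀ j : c, ∑ i, ((X * Y) i j)^2 ≤ spec X ^2 * ∑ k, (Y k j)^2 := by
    intro j
    set v : EuclideanSpace ℝ b := (WithLp.equiv 2 (b → ℝ)).symm (fun k => Y k j) with hv
    have h1 : ‖(LinearMap.toContinuousLinearMap (Matrix.toEuclideanLin X)) v‖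
        ≤ spec X * ‖v‖ := (LinearMap.toContinuousLinearMap (Matrix.toEuclideanLin X)).le_opNorm v
    have h2 : (LinearMap.toContinuousLinearMap (Matrix.toEuclideanLin X)) v
        = (WithLp.equiv 2 (a → ℝ)).symm (X *ᵥ (fun k => Y k j)) := by
      simp [Matrix.toEuclideanLin_apply, hv]
    have h3 : ‖(WithLp.equiv 2 (a → ℝ)).symm (X *ᵥ (fun k => Y k j))‖^2
        = ∑ i, ((X * Y) i j)^2 := by
      rw [EuclideanSpace.norm_eq, Real.sq_sqrt (by positivity)]
      congr 1; ext i
      simp [Matrix.mul_apply, Matrix.mulVec, dotProduct, sq_abs]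
    have h4 : ‖v‖^2 = ∑ k, (Y k j)^2 := by
      rw [hv, EuclideanSpace.norm_eq, Real.sq_sqrt (by positivity)]
      congr 1; ext k
      simp [sq_abs]
    have h5 : ‖(LinearMap.toContinuousLinearMap (Matrix.toEuclideanLin X)) v‖^2
        ≤ (spec X * ‖v‖)^2 := by
      have := norm_nonneg ((LinearMap.toContinuousLinearMap (Matrix.toEuclideanLin X)) v)
      nlinarith
    rw [h2, h3] at h5
    calc ∑ i, ((X * Y) i j)^2 ≤ (spec X * ‖v‖)^2 := h5
      _ = spec X^2 * ‖v‖^2 := by ring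
      _ = spec X^2 * ∑ k, (Y k j)^2 := by rw [h4]
  have hsq : ∑ i, ∑ j, ((X * Y) i j)^2 ≤ (spec X * frob Y)^2 := by
    rw [Finset.sum_comm]
    calc ∑ j, ∑ i, ((X * Y) i j)^2 ≤ ∑ j : c, spec X^2 * ∑ k, (Y k j)^2 :=
          Finset.sum_le_sum fun j _ => key j
      _ = spec X^2 * ∑ j, ∑ k, (Y k j)^2 := by rw [← Finset.mul_sum]
      _ = spec X^2 * frob Y^2 := by rw [frob_sq, Finset.sum_comm]
      _ = (spec X * frob Y)^2 := by ring
  calc frob (X * Y) = Real.sqrt (∑ i, ∑ j, ((X * Y) i j)^2) := rfl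
    _ ≤ Real.sqrt ((spec X * frob Y)^2) := Real.sqrt_le_sqrt hsq
    _ = spec X * frob Y := Real.sqrt_sq (mul_nonneg (spec_nonneg _) (frob_nonneg _))

end MyOpt

set_option linter.unusedSectionVars false
namespace MyOpt

variable {a b c d e : Type*} [Fintype a] [Fintype b] [Fintype c] [Fintype d] [Fintype e]

lemma summable_matrix_of_frob {f : ℕ → Matrix a b ℝ} {g : ℕ → ℝ} (hg : Summable g)
    (h : ∀ k, frob (f k) ≤ g k) : Summable f := by
  have he : ∀ (i : a) (j : b), Summable fun k => f k i j := fun i j =>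
    Summable.of_norm_bounded hg fun k =>
      (Real.norm_eq_abs _).le.trans ((abs_entry_le_frob (f k) i j).trans (h k))
  exact Pi.summable.mpr fun i => Pi.summable.mpr fun j => he i j

/-- `X ↦ A * X * B` as a linear map. -/
def lrMap (A : Matrix d a ℝ) (B : Matrix b e ℝ) : Matrix a b ℝ →ₗ[ℝ] Matrix d e ℝ where
  toFun X := A * X * B
  map_add' X Y := by
    show A * (X + Y) * B = A * X * B + A * Y * B
    rw [Matrix.mul_add, Matrix.add_mul]
  map_smul' r X := by
    show A * (r • X) * B = r • (A * X * B)
    rw [Matrix.mul_smul, Matrix.smul_mul]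

lemma hasSum_lr {f : ℕ → Matrix a b ℝ} {S : Matrix a b ℝ} (hf : HasSum f S)
    (A : Matrix d a ℝ) (B : Matrix b e ℝ) :
    HasSum (fun k => A * f k * B) (A * S * B) := by
  have hcont : Continuous (lrMap (a := a) (b := b) A B) :=
    LinearMap.continuous_of_finiteDimensional _
  exact hf.map (lrMap A B).toAddMonoidHom hcont

/-- `X ↦ (M * X).trace` as a linear map. -/
def trMap (M : Matrix a b ℝ) : Matrix b a ℝ →ₗ[ℝ] ℝ where
  toFun X := (M * X).trace
  map_add' X Y := by
    show (M * (X + Y)).trace = (M * X).trace + (M * Y).trace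
    rw [Matrix.mul_add, Matrix.trace_add]
  map_smul' r X := by
    show (M * (r • X)).trace = r • (M * X).trace
    rw [Matrix.mul_smul, Matrix.trace_smul]

lemma hasSum_tr {f : ℕ → Matrix b a ℝ} {S : Matrix b a ℝ} (hf : HasSum f S)
    (M : Matrix a b ℝ) : HasSum (fun k => (M * f k).trace) (M * S).trace := by
  have hcont : Continuous (trMap (a := a) (b := b) M) :=
    LinearMap.continuous_of_finiteDimensional _
  exact hf.map (trMap M).toAddMonoidHom hcont

/-- transpose as a linear map. -/
def trpMap : Matrix a b ℝ →ₗ[ℝ] Matrix b a ℝ where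
  toFun X := Xᵀ
  map_add' X Y := Matrix.transpose_add X Y
  map_smul' r X := Matrix.transpose_smul r X

lemma hasSum_trp {f : ℕ → Matrix a b ℝ} {S : Matrix a b ℝ} (hf : HasSum f S) :
    HasSum (fun k => (f k)ᵀ) Sᵀ := by
  have hcont : Continuous (trpMap (a := a) (b := b)) :=
    LinearMap.continuous_of_finiteDimensional _
  exact hf.map (trpMap (a := a) (b := b)).toAddMonoidHom hcont

/-- quadratic form as a linear map in the matrix. -/
def qfMap (x : a → ℝ) : Matrix a a ℝ →ₗ[ℝ] ℝ where
  toFun X := x ⬝ᵥ (X *ᵥ x)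
  map_add' X Y := by
    show x ⬝ᵥ ((X + Y) *ᵥ x) = x ⬝ᵥ (X *ᵥ x) + x ⬝ᵥ (Y *ᵥ x)
    rw [Matrix.add_mulVec, dotProduct_add]
  map_smul' r X := by
    show x ⬝ᵥ ((r • X) *ᵥ x) = r • (x ⬝ᵥ (X *ᵥ x))
    rw [Matrix.smul_mulVec, dotProduct_smul]

lemma hasSum_qf {f : ℕ → Matrix a a ℝ} {S : Matrix a a ℝ} (hf : HasSum f S) (x : a → ℝ) :
    HasSum (fun k => x ⬝ᵥ (f k *ᵥ x)) (x ⬝ᵥ (S *ᵥ x)) := by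
  have hcont : Continuous (qfMap (a := a) x) :=
    LinearMap.continuous_of_finiteDimensional _
  exact hf.map (qfMap x).toAddMonoidHom hcont

end MyOpt

namespace MyOpt

variable {a : Type*} [Fintype a] [DecidableEq a]

lemma frob_pow_prod_le {L : Matrix a a ℝ} {C ρ : ℝ}
    (hL : ∀ k, frob (L^k) ≤ C * ρ^k) (k : ℕ) :
    frob (L^k * (Lᵀ)^k) ≤ C^2 * (ρ^2)^k := by
  have h1 : frob (L^k * (Lᵀ)^k) ≤ frob (L^k) * frob (L^k) := by
    calc frob (L^k * (Lᵀ)^k) ≤ frob (L^k) * frob ((Lᵀ)^k) := frob_mul_le _ _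
      _ = frob (L^k) * frob (L^k) := by rw [← Matrix.transpose_pow, frob_transpose]
  have h2 := hL k
  have h0 := frob_nonneg (L^k)
  calc frob (L^k * (Lᵀ)^k) ≤ frob (L^k) * frob (L^k) := h1
    _ ≤ (C*ρ^k) * (C*ρ^k) := mul_le_mul h2 h2 h0 (le_trans h0 h2)
    _ = C^2 * (ρ^2)^k := by ring

lemma summable_pow_prod {L : Matrix a a ℝ} {C ρ : ℝ} (hρ0 : 0 ≤ ρ) (hρ1 : ρ < 1)
    (hL : ∀ k, frob (L^k) ≤ C * ρ^k) :
    Summable (fun k : ℕ => L^k * (Lᵀ)^k) :=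
  summable_matrix_of_frob
    ((summable_geometric_of_lt_one (by positivity) (by nlinarith)).mul_left (C^2))
    (frob_pow_prod_le hL)

lemma lyap {L : Matrix a a ℝ} (h : Summable (fun k : ℕ => L^k * (Lᵀ)^k)) :
    (∑' k : ℕ, L^k * (Lᵀ)^k) = 1 + L * (∑' k : ℕ, L^k * (Lᵀ)^k) * Lᵀ := by
  have h0 := Summable.tsum_eq_zero_add h
  have hshift : (fun k : ℕ => L^(k+1) * (Lᵀ)^(k+1)) = fun k => L * (L^k * (Lᵀ)^k) * Lᵀ := by
    funext k
    rw [pow_succ', pow_succ]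
    noncomm_ring
  calc (∑' k : ℕ, L^k * (Lᵀ)^k)
      = L^0 * (Lᵀ)^0 + ∑' k : ℕ, L^(k+1) * (Lᵀ)^(k+1) := h0
    _ = 1 + L * (∑' k : ℕ, L^k * (Lᵀ)^k) * Lᵀ := by
        rw [hshift, (hasSum_lr h.hasSum L Lᵀ).tsum_eq]
        simp

lemma S_transpose {L : Matrix a a ℝ} (h : Summable (fun k : ℕ => L^k * (Lᵀ)^k)) :
    (∑' k : ℕ, L^k * (Lᵀ)^k)ᵀ = ∑' k : ℕ, L^k * (Lᵀ)^k := by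
  have h1 := hasSum_trp h.hasSum
  have h2 : (fun k : ℕ => (L^k * (Lᵀ)^k)ᵀ) = fun k : ℕ => L^k * (Lᵀ)^k := by
    funext k
    simp [Matrix.transpose_mul, Matrix.transpose_pow]
  rw [h2] at h1
  exact (h1.tsum_eq).symm

lemma S_psd {L : Matrix a a ℝ} (h : Summable (fun k : ℕ => L^k * (Lᵀ)^k)) :
    (∑' k : ℕ, L^k * (Lᵀ)^k).PosSemidef := by
  rw [Matrix.posSemidef_iff_dotProduct_mulVec]
  constructor
  · rw [Matrix.IsHermitian, Matrix.conjTranspose_eq_transpose_of_trivial, S_transpose h]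
  · intro x
    have hq := hasSum_qf h.hasSum x
    have hterm : ∀ k : ℕ, 0 ≤ x ⬝ᵥ ((L^k * (Lᵀ)^k) *ᵥ x) := by
      intro k
      have hp : (L^k * (Lᵀ)^k).PosSemidef := by
        have hp0 := Matrix.posSemidef_self_mul_conjTranspose (L^k)
        rwa [Matrix.conjTranspose_eq_transpose_of_trivial, Matrix.transpose_pow] at hp0
      simpa using hp.dotProduct_mulVec_nonneg x
    have := hq.tsum_eq
    simpa [← this, star_trivial] using tsum_nonneg hterm

lemma tendsto_rem {L : Matrix a a ℝ} {C ρ : ℝ} (hρ0 : 0 ≤ ρ) (hρ1 : ρ < 1)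
    (hL : ∀ k, frob (L^k) ≤ C * ρ^k) (X : Matrix a a ℝ) :
    Filter.Tendsto (fun N : ℕ => L^N * X * (Lᵀ)^N) Filter.atTop (nhds 0) := by
  have hb : Filter.Tendsto (fun N : ℕ => (C^2 * frob X) * (ρ^2)^N)
      Filter.atTop (nhds 0) := by
    have := tendsto_pow_atTop_nhds_zero_of_lt_one (by positivity : (0:ℝ) ≤ ρ^2)
      (by nlinarith : ρ^2 < 1)
    simpa using this.const_mul (C^2 * frob X)
  have hentry : ∀ (i j : a),
      Filter.Tendsto (fun N : ℕ => (L^N * X * (Lᵀ)^N) i j) Filter.atTop (nhds 0) := by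
    intro i j
    refine squeeze_zero_norm (fun N => ?_) hb
    have h1 : |(L^N * X * (Lᵀ)^N) i j| ≤ frob (L^N * X * (Lᵀ)^N) := abs_entry_le_frob _ i j
    have h2 : frob (L^N * X * (Lᵀ)^N) ≤ frob (L^N) * frob X * frob (L^N) := by
      calc frob (L^N * X * (Lᵀ)^N) ≤ frob (L^N * X) * frob ((Lᵀ)^N) := frob_mul_le _ _
        _ ≤ frob (L^N) * frob X * frob ((Lᵀ)^N) :=
            mul_le_mul_of_nonneg_right (frob_mul_le _ _) (frob_nonneg _)
        _ = frob (L^N) * frob X * frob (L^N) := by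
            rw [← Matrix.transpose_pow, frob_transpose]
    have h3 : frob (L^N) * frob X * frob (L^N) ≤ (C^2 * frob X) * (ρ^2)^N := by
      have h4 := hL N
      have h5 := frob_nonneg (L^N)
      have h6 := frob_nonneg X
      have h7 : frob (L^N) * frob (L^N) ≤ (C*ρ^N)*(C*ρ^N) :=
        mul_le_mul h4 h4 h5 (h5.trans h4)
      calc frob (L^N) * frob X * frob (L^N)
          = (frob (L^N) * frob (L^N)) * frob X := by ring
        _ ≤ ((C*ρ^N)*(C*ρ^N)) * frob X := mul_le_mul_of_nonneg_right h7 h6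
        _ = (C^2 * frob X) * (ρ^2)^N := by ring
    calc ‖(L^N * X * (Lᵀ)^N) i j‖ = |(L^N * X * (Lᵀ)^N) i j| := rfl
      _ ≤ (C^2 * frob X) * (ρ^2)^N := le_trans h1 (le_trans h2 h3)
  exact tendsto_pi_nhds.mpr fun i => tendsto_pi_nhds.mpr fun j => by
    simpa using hentry i j

lemma tsum_eq_of_rec {L E0 Dl : Matrix a a ℝ} (hrec : Dl = E0 + L * Dl * Lᵀ)
    (hF : Summable (fun k : ℕ => L^k * E0 * (Lᵀ)^k))
    (hrem : Filter.Tendsto (fun N : ℕ => L^N * Dl * (Lᵀ)^N) Filter.atTop (nhds 0)) :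
    (∑' k : ℕ, L^k * E0 * (Lᵀ)^k) = Dl := by
  have hpart : ∀ N : ℕ,
      (∑ k ∈ Finset.range N, L^k * E0 * (Lᵀ)^k) = Dl - L^N * Dl * (Lᵀ)^N := by
    intro N
    induction N with
    | zero => simp
    | succ N ih =>
      rw [Finset.sum_range_succ, ih]
      have hpow : L^(N+1) * Dl * (Lᵀ)^(N+1) = L^N * (L * Dl * Lᵀ) * (Lᵀ)^N := by
        rw [pow_succ, pow_succ']
        noncomm_ring
      rw [hpow]
      have h2 : L^N * Dl * (Lᵀ)^N
          = L^N * E0 * (Lᵀ)^N + L^N * (L * Dl * Lᵀ) * (Lᵀ)^N := by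
        conv_lhs => rw [hrec]
        rw [Matrix.mul_add, Matrix.add_mul]
      rw [h2]
      abel
  have h1 := hF.hasSum.tendsto_sum_nat
  simp only [hpart] at h1
  have h2 : Filter.Tendsto (fun N : ℕ => Dl - L^N * Dl * (Lᵀ)^N)
      Filter.atTop (nhds (Dl - 0)) := tendsto_const_nhds.sub hrem
  rw [sub_zero] at h2
  exact tendsto_nhds_unique h1 h2

end MyOpt

open MyOpt

theorem optimism_of_bonus_cost {n m : ℕ}
    (Ahat Astar : Matrix (Fin n) (Fin n) ℝ) (Bhat Bstar : Matrix (Fin n) (Fin m) ℝ)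
    (K : Matrix (Fin m) (Fin n) ℝ) (Kbar C ρ σw lam D β : ℝ)
    (Q : Matrix (Fin n) (Fin n) ℝ) (R : Matrix (Fin m) (Fin m) ℝ)
    (V : Matrix (Fin n ⊕ Fin m) (Fin n ⊕ Fin m) ℝ)
    (hK : frob K ≤ Kbar) (hC : 1 ≤ C) (hρ : ρ ∈ Set.Ioo (0 : ℝ) 1)
    (hhat : ∀ k : ℕ, frob ((Ahat + Bhat * K) ^ k) ≤ C * ρ ^ k)
    (hstar : ∀ k : ℕ, frob ((Astar + Bstar * K) ^ k) ≤ C * ρ ^ k)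
    (hσ : 0 < σw) (hQ : Q.IsSymm) (hR : R.IsSymm) (hV : V.PosDef)
    (hlam : 0 < lam) (hD : 0 ≤ D) (hβ : 0 ≤ β)
    (hdiff : frob ((fromCols Ahat Bhat - fromCols Astar Bstar) * msqrt V) ≤ β)
    (hstarnorm : frob (fromCols Astar Bstar) ≤ D + 1 / lam) :
    ((Q + Kᵀ * R * K) * clCov Ahat Bhat K σw).trace -
        (C ^ 2 * (frob Q + Kbar ^ 2 * frob R) / (1 - ρ ^ 2)) *
          (2 * (D + 1 / lam) * β * spec (msqrt V) + β ^ 2) *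
          (V⁻¹ * clCovTilde Ahat Bhat K σw).trace
      ≤ ((Q + Kᵀ * R * K) * clCov Astar Bstar K σw).trace := by
  obtain ⟨hρ0, hρ1⟩ := hρ
  have hρ20 : (0:ℝ) ≤ ρ^2 := by positivity
  have hρ21 : ρ^2 < 1 := by nlinarith
  have h1ρ : (0:ℝ) < 1 - ρ^2 := by linarith
  simp only [clCovTilde, clCov]
  set H : Matrix (Fin n ⊕ Fin m) (Fin n) ℝ := fromRows 1 K with hHdef
  set M : Matrix (Fin n) (Fin n) ℝ := Q + Kᵀ * R * K with hMdef
  set Lh : Matrix (Fin n) (Fin n) ℝ := Ahat + Bhat * K with hLhdef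
  set Ls : Matrix (Fin n) (Fin n) ℝ := Astar + Bstar * K with hLsdef
  set Th : Matrix (Fin n) (Fin n ⊕ Fin m) ℝ := fromCols Ahat Bhat with hThdef
  set Ts : Matrix (Fin n) (Fin n ⊕ Fin m) ℝ := fromCols Astar Bstar with hTsdef
  have hLhH : Th * H = Lh := by
    rw [hThdef, hHdef, Matrix.fromCols_mul_fromRows, Matrix.mul_one]
  have hLsH : Ts * H = Ls := by
    rw [hTsdef, hHdef, Matrix.fromCols_mul_fromRows, Matrix.mul_one]
  have hSumh : Summable (fun k : ℕ => Lh^k * (Lhᵀ)^k) := summable_pow_prod hρ0.le hρ1 hhat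
  have hSums : Summable (fun k : ℕ => Ls^k * (Lsᵀ)^k) := summable_pow_prod hρ0.le hρ1 hstar
  set Sh : Matrix (Fin n) (Fin n) ℝ := ∑' k : ℕ, Lh^k * (Lhᵀ)^k with hShdef
  set Ss : Matrix (Fin n) (Fin n) ℝ := ∑' k : ℕ, Ls^k * (Lsᵀ)^k with hSsdef
  have hShT : Shᵀ = Sh := S_transpose hSumh
  have hSh_psd : Sh.PosSemidef := S_psd hSumh
  -- symmetry of M
  have hMsymm : Mᵀ = M := by
    rw [hMdef, Matrix.transpose_add, Matrix.transpose_mul, Matrix.transpose_mul,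
      Matrix.transpose_transpose, hQ.eq, hR.eq, Matrix.mul_assoc]
  have hfrobM : frob M ≤ frob Q + Kbar^2 * frob R := by
    have hKb0 : 0 ≤ Kbar := (frob_nonneg K).trans hK
    have hR0 := frob_nonneg R
    have hK0 := frob_nonneg K
    have h1 : frob (Kᵀ * R * K) ≤ Kbar^2 * frob R := by
      calc frob (Kᵀ * R * K) ≤ frob (Kᵀ * R) * frob K := frob_mul_le _ _
        _ ≤ frob Kᵀ * frob R * frob K :=
            mul_le_mul_of_nonneg_right (frob_mul_le _ _) hK0
        _ = frob K * frob R * frob K := by rw [frob_transpose]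
        _ ≤ Kbar * frob R * Kbar := by
            have s1 : frob K * frob R ≤ Kbar * frob R :=
              mul_le_mul_of_nonneg_right hK hR0
            exact mul_le_mul s1 hK hK0 (mul_nonneg hKb0 hR0)
        _ = Kbar^2 * frob R := by ring
    calc frob M ≤ frob Q + frob (Kᵀ * R * K) := frob_add_le _ _
      _ ≤ frob Q + Kbar^2 * frob R := by linarith
  -- the tilde covariance objects
  set T : Matrix (Fin n ⊕ Fin m) (Fin n ⊕ Fin m) ℝ := H * Sh * Hᵀ with hTdef
  have hT_psd : T.PosSemidef := by
    have := hSh_psd.mul_mul_conjTranspose_same H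
    rwa [Matrix.conjTranspose_eq_transpose_of_trivial] at this
  set sqT : Matrix (Fin n ⊕ Fin m) (Fin n ⊕ Fin m) ℝ := msqrt T with hsqTdef
  have hsqT : sqT * sqT = T := by
    rw [hsqTdef]
    exact msqrt_mul_self' hT_psd
  have hsqTt : sqTᵀ = sqT := by
    rw [hsqTdef]
    exact msqrt_transpose' hT_psd
  have hV_psd : V.PosSemidef := hV.posSemidef
  have hsqV : msqrt V * msqrt V = V := by
    exact msqrt_mul_self' hV_psd
  have hsqVt : (msqrt V)ᵀ = msqrt V := by
    exact msqrt_transpose' hV_psd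
  have hVdet : IsUnit (msqrt V).det := by
    have hVu : IsUnit V.det := isUnit_iff_ne_zero.mpr (ne_of_gt hV.det_pos)
    rw [← hsqV, Matrix.det_mul] at hVu
    exact isUnit_of_mul_isUnit_left hVu
  set U : Matrix (Fin n ⊕ Fin m) (Fin n ⊕ Fin m) ℝ := (msqrt V)⁻¹ with hUdef
  have hUV : msqrt V * U = 1 := Matrix.mul_nonsing_inv _ hVdet
  have hUt : Uᵀ = U := by rw [hUdef, Matrix.transpose_nonsing_inv, hsqVt]
  have hUU : U * U = V⁻¹ := by rw [hUdef, ← Matrix.mul_inv_rev, hsqV]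
  set r : ℝ := frob (U * sqT) with hrdef
  have hr0 : 0 ≤ r := frob_nonneg _
  have hr2 : r^2 = (V⁻¹ * T).trace := by
    rw [hrdef, frob_sq_eq_trace]
    have e1 : (U * sqT)ᵀ * (U * sqT) = (sqT * V⁻¹) * sqT := by
      rw [Matrix.transpose_mul, hUt, hsqTt, ← hUU]
      noncomm_ring
    rw [e1, Matrix.trace_mul_comm, ← Matrix.mul_assoc, hsqT, Matrix.trace_mul_comm]
  set cc : ℝ := 2 * (D + 1/lam) * β * spec (msqrt V) + β^2 with hccdef
  have hDl0 : 0 ≤ D + 1/lam := by positivity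
  have hcc0 : 0 ≤ cc := by
    rw [hccdef]
    have := spec_nonneg (msqrt V)
    positivity
  -- the difference pieces
  set Dm : Matrix (Fin n) (Fin n ⊕ Fin m) ℝ := Th - Ts with hDmdef
  set W : Matrix (Fin n) (Fin n ⊕ Fin m) ℝ := Dm * msqrt V with hWdef
  have hfrobW : frob W ≤ β := hdiff
  have hDm : Dm = W * U := by
    rw [hWdef, Matrix.mul_assoc, hUV, Matrix.mul_one]
  set Δ : Matrix (Fin n) (Fin n) ℝ := Lh - Ls with hΔdef
  have hΔ2 : Δ = Dm * H := by rw [hΔdef, hDmdef, Matrix.sub_mul, hLhH, hLsH]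
  set X : Matrix (Fin n) (Fin n ⊕ Fin m) ℝ := W * (U * sqT) with hXdef
  have hfrobX : frob X ≤ β * r := by
    calc frob X ≤ frob W * frob (U * sqT) := frob_mul_le _ _
      _ ≤ β * r := mul_le_mul_of_nonneg_right hfrobW hr0
  set E0 : Matrix (Fin n) (Fin n) ℝ := Lh * Sh * Lhᵀ - Ls * Sh * Lsᵀ with hE0def
  -- core per-G bound
  have hkey : ∀ G : Matrix (Fin n) (Fin n) ℝ, Gᵀ = G →
      (G * E0).trace ≤ frob G * (cc * r^2) := by
    intro G hGsymm
    have hG0 := frob_nonneg G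
    have hE0split : E0 = Δ * Sh * Δᵀ + (Δ * Sh * Lsᵀ + Ls * Sh * Δᵀ) := by
      rw [hE0def, hΔdef, Matrix.transpose_sub]
      noncomm_ring
    have hXX : Δ * Sh * Δᵀ = X * Xᵀ := by
      rw [hΔ2, hDm, hXdef]
      simp only [Matrix.transpose_mul, hUt, hsqTt]
      simp only [Matrix.mul_assoc]
      rw [← Matrix.mul_assoc sqT sqT, hsqT, hTdef]
      simp only [Matrix.mul_assoc]
    have hΔSL : Δ * Sh * Lsᵀ = X * (sqT * Tsᵀ) := by
      rw [hΔ2, hDm, hXdef, ← hLsH]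
      simp only [Matrix.transpose_mul, hUt, hsqTt]
      simp only [Matrix.mul_assoc]
      rw [← Matrix.mul_assoc sqT sqT, hsqT, hTdef]
      simp only [Matrix.mul_assoc]
    have t1bound : (G * (Δ * Sh * Δᵀ)).trace ≤ frob G * (β^2 * r^2) := by
      rw [hXX]
      calc (G * (X * Xᵀ)).trace ≤ frob G * frob (X * Xᵀ) := trace_mul_le _ _
        _ ≤ frob G * (β^2 * r^2) := by
            refine mul_le_mul_of_nonneg_left ?_ hG0
            calc frob (X * Xᵀ) ≤ frob X * frob Xᵀ := frob_mul_le _ _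
              _ = frob X * frob X := by rw [frob_transpose]
              _ ≤ (β*r) * (β*r) :=
                  mul_le_mul hfrobX hfrobX (frob_nonneg _) (by positivity)
              _ = β^2 * r^2 := by ring
    have t2bound : (G * (Δ * Sh * Lsᵀ)).trace ≤ frob G * ((D + 1/lam) * β * spec (msqrt V) * r^2) := by
      rw [hΔSL]
      have e1 : G * (X * (sqT * Tsᵀ)) = (G * X) * (sqT * Tsᵀ) :=
        (Matrix.mul_assoc _ _ _).symm
      rw [e1, Matrix.trace_mul_comm]
      have e2 : (sqT * Tsᵀ) * (G * X) = (sqT * (Tsᵀ * (G * W))) * (U * sqT) := by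
        rw [hXdef]
        simp only [Matrix.mul_assoc]
      rw [e2]
      have hZ : frob (Tsᵀ * (G * W)) ≤ (D + 1/lam) * (frob G * β) := by
        calc frob (Tsᵀ * (G * W)) ≤ frob Tsᵀ * frob (G * W) := frob_mul_le _ _
          _ ≤ frob Tsᵀ * (frob G * frob W) :=
              mul_le_mul_of_nonneg_left (frob_mul_le _ _) (frob_nonneg _)
          _ ≤ (D + 1/lam) * (frob G * β) := by
              rw [frob_transpose]
              have h2 := frob_nonneg G
              have h3 := frob_nonneg W
              calc frob Ts * (frob G * frob W)
                  ≤ (D + 1/lam) * (frob G * frob W) :=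
                    mul_le_mul_of_nonneg_right hstarnorm (mul_nonneg h2 h3)
                _ ≤ (D + 1/lam) * (frob G * β) :=
                    mul_le_mul_of_nonneg_left
                      (mul_le_mul_of_nonneg_left hfrobW h2) hDl0
      have hsqTZ : ∀ Z : Matrix (Fin n ⊕ Fin m) (Fin n ⊕ Fin m) ℝ,
          frob (sqT * Z) ≤ spec (msqrt V) * (r * frob Z) := by
        intro Z
        have e3 : sqT * Z = msqrt V * ((U * sqT) * Z) := by
          rw [← Matrix.mul_assoc, ← Matrix.mul_assoc, hUV, Matrix.one_mul]
        calc frob (sqT * Z) = frob (msqrt V * ((U * sqT) * Z)) := by rw [e3]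
          _ ≤ spec (msqrt V) * frob ((U * sqT) * Z) := frob_spec_mul _ _
          _ ≤ spec (msqrt V) * (r * frob Z) :=
              mul_le_mul_of_nonneg_left (frob_mul_le _ _) (spec_nonneg _)
      calc ((sqT * (Tsᵀ * (G * W))) * (U * sqT)).trace
          ≤ frob (sqT * (Tsᵀ * (G * W))) * frob (U * sqT) := trace_mul_le _ _
        _ ≤ frob G * ((D + 1/lam) * β * spec (msqrt V) * r^2) := by
            have h4 := hsqTZ (Tsᵀ * (G * W))
            have h5 := spec_nonneg (msqrt V)
            calc frob (sqT * (Tsᵀ * (G * W))) * frob (U * sqT)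
                = frob (sqT * (Tsᵀ * (G * W))) * r := by rw [hrdef]
              _ ≤ (spec (msqrt V) * (r * frob (Tsᵀ * (G * W)))) * r :=
                  mul_le_mul_of_nonneg_right h4 hr0
              _ ≤ (spec (msqrt V) * (r * ((D + 1/lam) * (frob G * β)))) * r := by
                  refine mul_le_mul_of_nonneg_right
                    (mul_le_mul_of_nonneg_left
                      (mul_le_mul_of_nonneg_left hZ hr0) h5) hr0
              _ = frob G * ((D + 1/lam) * β * spec (msqrt V) * r^2) := by ring
    have t3eq : (G * (Ls * Sh * Δᵀ)).trace = (G * (Δ * Sh * Lsᵀ)).trace := by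
      rw [← Matrix.trace_transpose (G * (Ls * Sh * Δᵀ))]
      have e4 : (G * (Ls * Sh * Δᵀ))ᵀ = (Δ * Sh * Lsᵀ) * G := by
        simp only [Matrix.transpose_mul, Matrix.transpose_transpose, hShT, hGsymm]
        noncomm_ring
      rw [e4, Matrix.trace_mul_comm]
    calc (G * E0).trace
        = (G * (Δ * Sh * Δᵀ)).trace + ((G * (Δ * Sh * Lsᵀ)).trace + (G * (Ls * Sh * Δᵀ)).trace) := by
          rw [hE0split, Matrix.mul_add, Matrix.mul_add, Matrix.trace_add, Matrix.trace_add]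
      _ ≤ frob G * (β^2 * r^2) + (frob G * ((D + 1/lam) * β * spec (msqrt V) * r^2)
            + frob G * ((D + 1/lam) * β * spec (msqrt V) * r^2)) := by
          rw [t3eq]
          have := t2bound
          linarith [t1bound, t2bound]
      _ = frob G * (cc * r^2) := by rw [hccdef]; ring
  -- recursion and series representation of the difference
  have hlyaph : Sh = 1 + Lh * Sh * Lhᵀ := lyap hSumh
  have hlyaps : Ss = 1 + Ls * Ss * Lsᵀ := lyap hSums
  have hrec : Sh - Ss = E0 + Ls * (Sh - Ss) * Lsᵀ := by
    conv_lhs => rw [hlyaph, hlyaps]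
    rw [hE0def]
    noncomm_ring
  have hFsum : Summable (fun k : ℕ => Ls^k * E0 * (Lsᵀ)^k) := by
    refine summable_matrix_of_frob
      (((summable_geometric_of_lt_one hρ20 hρ21).mul_left (C^2 * frob E0))) (fun k => ?_)
    calc frob (Ls^k * E0 * (Lsᵀ)^k) ≤ frob (Ls^k * E0) * frob ((Lsᵀ)^k) := frob_mul_le _ _
      _ ≤ frob (Ls^k) * frob E0 * frob ((Lsᵀ)^k) :=
          mul_le_mul_of_nonneg_right (frob_mul_le _ _) (frob_nonneg _)
      _ = frob (Ls^k) * frob E0 * frob (Ls^k) := by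
          rw [← Matrix.transpose_pow, frob_transpose]
      _ ≤ C^2 * frob E0 * (ρ^2)^k := by
          have h4 := hstar k
          have h5 := frob_nonneg (Ls^k)
          have h6 := frob_nonneg E0
          have h7 : frob (Ls^k) * frob (Ls^k) ≤ (C*ρ^k)*(C*ρ^k) :=
            mul_le_mul h4 h4 h5 (h5.trans h4)
          calc frob (Ls^k) * frob E0 * frob (Ls^k)
              = (frob (Ls^k) * frob (Ls^k)) * frob E0 := by ring
            _ ≤ ((C*ρ^k)*(C*ρ^k)) * frob E0 := mul_le_mul_of_nonneg_right h7 h6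
            _ = C^2 * frob E0 * (ρ^2)^k := by ring
  have hrem := tendsto_rem hρ0.le hρ1 hstar (Sh - Ss)
  have htsum : (∑' k : ℕ, Ls^k * E0 * (Lsᵀ)^k) = Sh - Ss := tsum_eq_of_rec hrec hFsum hrem
  have hFhas : HasSum (fun k : ℕ => Ls^k * E0 * (Lsᵀ)^k) (Sh - Ss) := by
    rw [← htsum]; exact hFsum.hasSum
  have htr : HasSum (fun k : ℕ => (M * (Ls^k * E0 * (Lsᵀ)^k)).trace) ((M * (Sh - Ss)).trace) :=
    hasSum_tr hFhas M
  have hccr2 : 0 ≤ cc * r^2 := mul_nonneg hcc0 (sq_nonneg r)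
  have hcore : ∀ k : ℕ, (M * (Ls^k * E0 * (Lsᵀ)^k)).trace
      ≤ (frob M * C^2 * (cc * r^2)) * (ρ^2)^k := by
    intro k
    have e6 : M * (Ls^k * E0 * (Lsᵀ)^k) = (M * Ls^k * E0) * (Lsᵀ)^k := by noncomm_ring
    have e7 : (Lsᵀ)^k * (M * Ls^k * E0) = ((Lsᵀ)^k * M * Ls^k) * E0 := by noncomm_ring
    rw [e6, Matrix.trace_mul_comm, e7]
    have hGsymm : ((Lsᵀ)^k * M * Ls^k)ᵀ = (Lsᵀ)^k * M * Ls^k := by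
      simp only [Matrix.transpose_mul, ← Matrix.transpose_pow, Matrix.transpose_transpose,
        hMsymm]
      rw [Matrix.transpose_pow, Matrix.mul_assoc]
    have hGfrob : frob ((Lsᵀ)^k * M * Ls^k) ≤ C^2 * (ρ^2)^k * frob M := by
      calc frob ((Lsᵀ)^k * M * Ls^k) ≤ frob ((Lsᵀ)^k * M) * frob (Ls^k) := frob_mul_le _ _
        _ ≤ frob ((Lsᵀ)^k) * frob M * frob (Ls^k) :=
            mul_le_mul_of_nonneg_right (frob_mul_le _ _) (frob_nonneg _)
        _ = frob (Ls^k) * frob M * frob (Ls^k) := by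
            rw [← Matrix.transpose_pow, frob_transpose]
        _ ≤ C^2 * (ρ^2)^k * frob M := by
            have h4 := hstar k
            have h5 := frob_nonneg (Ls^k)
            have h6 := frob_nonneg M
            have h7 : frob (Ls^k) * frob (Ls^k) ≤ (C*ρ^k)*(C*ρ^k) :=
              mul_le_mul h4 h4 h5 (h5.trans h4)
            calc frob (Ls^k) * frob M * frob (Ls^k)
                = (frob (Ls^k) * frob (Ls^k)) * frob M := by ring
              _ ≤ ((C*ρ^k)*(C*ρ^k)) * frob M := mul_le_mul_of_nonneg_right h7 h6
              _ = C^2 * (ρ^2)^k * frob M := by ring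
    calc (((Lsᵀ)^k * M * Ls^k) * E0).trace
        ≤ frob ((Lsᵀ)^k * M * Ls^k) * (cc * r^2) := hkey _ hGsymm
      _ ≤ (C^2 * (ρ^2)^k * frob M) * (cc * r^2) := mul_le_mul_of_nonneg_right hGfrob hccr2
      _ = (frob M * C^2 * (cc * r^2)) * (ρ^2)^k := by ring
  have hgb : HasSum (fun k : ℕ => (frob M * C^2 * (cc * r^2)) * (ρ^2)^k)
      ((frob M * C^2 * (cc * r^2)) * (1 - ρ^2)⁻¹) :=
    (hasSum_geometric_of_lt_one hρ20 hρ21).mul_left _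
  have htrace_le : (M * (Sh - Ss)).trace ≤ (frob M * C^2 * (cc * r^2)) * (1 - ρ^2)⁻¹ :=
    hasSum_le hcore htr hgb
  -- rewrite goal traces
  have hgoalh : (M * (σw ^ 2 • Sh)).trace = σw^2 * (M * Sh).trace := by
    rw [Matrix.mul_smul, Matrix.trace_smul, smul_eq_mul]
  have hgoals : (M * (σw ^ 2 • Ss)).trace = σw^2 * (M * Ss).trace := by
    rw [Matrix.mul_smul, Matrix.trace_smul, smul_eq_mul]
  have hgoalt : (V⁻¹ * (H * (σw ^ 2 • Sh) * Hᵀ)).trace = σw^2 * r^2 := by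
    rw [Matrix.mul_smul, Matrix.smul_mul, Matrix.mul_smul, Matrix.trace_smul, smul_eq_mul,
      ← hTdef, hr2]
  rw [hgoalh, hgoals, hgoalt]
  have hdiff_tr : (M * Sh).trace - (M * Ss).trace = (M * (Sh - Ss)).trace := by
    rw [Matrix.mul_sub, Matrix.trace_sub]
  have hfinal : σw^2 * (M * (Sh - Ss)).trace
      ≤ C ^ 2 * (frob Q + Kbar ^ 2 * frob R) / (1 - ρ ^ 2) * cc * (σw^2 * r^2) := by
    have hσ2 : (0:ℝ) ≤ σw^2 := sq_nonneg σw
    have hinv : (0:ℝ) ≤ (1 - ρ^2)⁻¹ := by positivity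
    have hC2 : (0:ℝ) ≤ C^2 := sq_nonneg C
    have step1 : σw^2 * (M * (Sh - Ss)).trace
        ≤ σw^2 * ((frob M * C^2 * (cc * r^2)) * (1 - ρ^2)⁻¹) :=
      mul_le_mul_of_nonneg_left htrace_le hσ2
    have step2 : frob M * (C^2 * (cc * r^2) * (1 - ρ^2)⁻¹)
        ≤ (frob Q + Kbar^2 * frob R) * (C^2 * (cc * r^2) * (1 - ρ^2)⁻¹) :=
      mul_le_mul_of_nonneg_right hfrobM (by positivity)
    calc σw^2 * (M * (Sh - Ss)).trace
        ≤ σw^2 * ((frob M * C^2 * (cc * r^2)) * (1 - ρ^2)⁻¹) := step1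
      _ = σw^2 * (frob M * (C^2 * (cc * r^2) * (1 - ρ^2)⁻¹)) := by ring
      _ ≤ σw^2 * ((frob Q + Kbar^2 * frob R) * (C^2 * (cc * r^2) * (1 - ρ^2)⁻¹)) :=
          mul_le_mul_of_nonneg_left step2 hσ2
      _ = C ^ 2 * (frob Q + Kbar ^ 2 * frob R) / (1 - ρ ^ 2) * cc * (σw^2 * r^2) := by
          rw [div_eq_mul_inv]; ring
  have h9 : σw^2 * (M * (Sh - Ss)).trace
      = σw^2 * (M * Sh).trace - σw^2 * (M * Ss).trace := by
    rw [← hdiff_tr]; ring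
  linarith [hfinal, h9]
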